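/- Let π = ((α^1, τ^1, a^1), …, (α^K, τ^K, a^K)) be a valid dynamic linear contract whose actions are consecutively decreasing, i.e., a^{k+1} = a^k − 1 for every 1 ≤ k ≤ K−1. Then there exists a valid free-fall dynamic linear contract π′ with Util(π′) ≥ Util(π). -/

import Mathlib

open Finset

/-- Indifference point `α_{i,i+1}` between actions `i` and `i+1`. -/
noncomputable def indiff (c R : ℕ → ℝ) (i : ℕ) : ℝ :=
  (c (i + 1) - c i) / (R (i + 1) - R i)

/-- Breakpoint `α_{i,i+1}` with the convention `α_{0,1} := 0`. -/
noncomputable def bp (c R : ℕ → ℝ) (i : ℕ) : ℝ :=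
  if i = 0 then 0 else indiff c R i

/-- A linear contract instance with `n ≥ 2` actions indexed `1,…,n`:
costs `0 = c_1 < … < c_n`, rewards `0 ≤ R_1 < … < R_n`, and indifference
points satisfying `0 < α_{1,2} < … < α_{n-1,n} ≤ 1`. -/
def LinInstance (n : ℕ) (c R : ℕ → ℝ) : Prop :=
  2 ≤ n ∧ c 1 = 0 ∧ 0 ≤ R 1 ∧
    (∀ i, 1 ≤ i → i < n → c i < c (i + 1)) ∧
    (∀ i, 1 ≤ i → i < n → R i < R (i + 1)) ∧
    0 < indiff c R 1 ∧
    (∀ i, 1 ≤ i → i + 1 ≤ n - 1 → indiff c R i < indiff c R (i + 1)) ∧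
    indiff c R (n - 1) ≤ 1

/-- Best-response set of the agent to the linear contract with scalar `x`. -/
def BR (n : ℕ) (c R : ℕ → ℝ) (x : ℝ) : Set ℕ :=
  {i | i ∈ Finset.Icc 1 n ∧ ∀ j ∈ Finset.Icc 1 n, x * R j - c j ≤ x * R i - c i}

/-- A dynamic linear contract with `K` segments (indexed `1,…,K`):
scalars `α`, durations `τ`, and actions `a`. -/
structure DLC where
  K : ℕ
  α : ℕ → ℝ
  τ : ℕ → ℝ
  a : ℕ → ℕ

namespace DLC

/-- Total duration of the first `k` segments. -/
noncomputable def Tsum (π : DLC) (k : ℕ) : ℝ := ∑ j ∈ Finset.Icc 1 k, π.τ j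

/-- Cumulative scalar contract of the first `k` segments. -/
noncomputable def Asum (π : DLC) (k : ℕ) : ℝ := ∑ j ∈ Finset.Icc 1 k, π.α j * π.τ j

/-- Time-averaged contract `ᾱ^k` after the first `k` segments. -/
noncomputable def avg (π : DLC) (k : ℕ) : ℝ := π.Asum k / π.Tsum k

/-- Validity: positive durations, nonnegative scalars, actions in `{1,…,n}`,
and each action is a best response to the historical average contract at the
end of its segment, and (for `k ≥ 2`) also at its beginning. -/
def Valid (n : ℕ) (c R : ℕ → ℝ) (π : DLC) : Prop :=
  1 ≤ π.K ∧
    (∀ k ∈ Finset.Icc 1 π.K, 0 ≤ π.α k ∧ 0 < π.τ k ∧ π.a k ∈ Finset.Icc 1 n) ∧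
    (∀ k ∈ Finset.Icc 1 π.K, π.a k ∈ BR n c R (π.avg k)) ∧
    (∀ k, 2 ≤ k → k ≤ π.K → π.a k ∈ BR n c R (π.avg (k - 1)))

/-- Time-averaged principal utility. -/
noncomputable def Util (R : ℕ → ℝ) (π : DLC) : ℝ :=
  (∑ k ∈ Finset.Icc 1 π.K, π.τ k * (1 - π.α k) * R (π.a k)) / π.Tsum π.K

/-- Time-averaged agent utility. -/
noncomputable def UtilA (c R : ℕ → ℝ) (π : DLC) : ℝ :=
  (∑ k ∈ Finset.Icc 1 π.K, π.τ k * (π.α k * R (π.a k) - c (π.a k))) / π.Tsum π.K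

/-- Free-fall: the zero contract is offered on every segment after the first. -/
def FreeFall (π : DLC) : Prop := ∀ k, 2 ≤ k → k ≤ π.K → π.α k = 0

/-- Cumulative principal utility `u_P^{(t)}(π)` up to time `t`. -/
noncomputable def cumUtil (R : ℕ → ℝ) (π : DLC) (t : ℝ) : ℝ :=
  ∑ k ∈ Finset.Icc 1 π.K,
    (min t (π.Tsum k) - min t (π.Tsum (k - 1))) * (1 - π.α k) * R (π.a k)

/-- Cumulative scalar contract `A^{(t)}` up to time `t`. -/
noncomputable def cumA (π : DLC) (t : ℝ) : ℝ :=
  ∑ k ∈ Finset.Icc 1 π.K, (min t (π.Tsum k) - min t (π.Tsum (k - 1))) * π.α k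

end DLC

set_option linter.unusedSectionVars false


lemma ff_telescope (g : ℕ → ℝ) (m : ℕ) :
    ∑ j ∈ Finset.Icc 1 m, (g j - g (j - 1)) = g m - g 0 := by
  induction m with
  | zero => simp
  | succ m ih =>
      rw [Finset.sum_Icc_succ_top (by omega : 1 ≤ m + 1), ih]
      simp

lemma ff_abel (E r : ℕ → ℝ) (hE : E 0 = 0) (m : ℕ) :
    ∑ k ∈ Finset.Icc 1 (m + 1), (E k - E (k - 1)) * r k
      = ∑ k ∈ Finset.Icc 1 m, E k * (r k - r (k + 1)) + E (m + 1) * r (m + 1) := by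
  induction m with
  | zero => simp [hE]
  | succ m ih =>
      rw [Finset.sum_Icc_succ_top (by omega : 1 ≤ m + 1 + 1), ih,
        Finset.sum_Icc_succ_top (by omega : 1 ≤ m + 1)]
      simp
      ring

lemma ff_sum_top (f : ℕ → ℝ) (k : ℕ) (hk : 1 ≤ k) :
    ∑ j ∈ Finset.Icc 1 k, f j = ∑ j ∈ Finset.Icc 1 (k - 1), f j + f k := by
  obtain ⟨m, rfl⟩ := Nat.exists_eq_add_of_le hk
  rw [Nat.add_comm 1 m, Finset.sum_Icc_succ_top (by omega : 1 ≤ m + 1)]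
  simp
section inst
variable {n : ℕ} {c R : ℕ → ℝ} (h : LinInstance n c R)
include h

lemma ff_indiff_mono : ∀ i j, 1 ≤ i → i ≤ j → j ≤ n - 1 → indiff c R i ≤ indiff c R j := by
  intro i j hi hij hj
  induction j with
  | zero => omega
  | succ j ih =>
      rcases Nat.eq_or_lt_of_le hij with rfl | hlt
      · exact le_rfl
      · exact le_trans (ih (by omega) (by omega)) (le_of_lt (h.2.2.2.2.2.2.1 j (by omega) hj))

lemma ff_indiff_pos : ∀ i, 1 ≤ i → i ≤ n - 1 → 0 < indiff c R i := fun i hi hin =>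
  lt_of_lt_of_le h.2.2.2.2.2.1 (ff_indiff_mono h 1 i le_rfl hi hin)

lemma ff_indiff_le1 : ∀ i, 1 ≤ i → i ≤ n - 1 → indiff c R i ≤ 1 := fun i hi hin =>
  le_trans (ff_indiff_mono h i (n-1) hi hin le_rfl) h.2.2.2.2.2.2.2

lemma ff_R_mono : ∀ i j, 1 ≤ i → i ≤ j → j ≤ n → R i ≤ R j := by
  intro i j hi hij hj
  induction j with
  | zero => omega
  | succ j ih =>
      rcases Nat.eq_or_lt_of_le hij with rfl | hlt
      · exact le_rfl
      · exact le_trans (ih (by omega) (by omega)) (le_of_lt (h.2.2.2.2.1 j (by omega) (by omega)))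

lemma ff_R_nonneg : ∀ i, 1 ≤ i → i ≤ n → 0 ≤ R i := fun i hi hin =>
  le_trans h.2.2.1 (ff_R_mono h 1 i le_rfl hi hin)

lemma ff_BR_pair (i : ℕ) (x : ℝ) (hi : 1 ≤ i) (hin : i + 1 ≤ n)
    (h1 : i ∈ BR n c R x) (h2 : i + 1 ∈ BR n c R x) : x = indiff c R i := by
  have hRlt : R i < R (i + 1) := h.2.2.2.2.1 i hi (by omega)
  have m1 : (i : ℕ) ∈ Finset.Icc 1 n := Finset.mem_Icc.2 ⟨hi, by omega⟩
  have m2 : (i + 1 : ℕ) ∈ Finset.Icc 1 n := Finset.mem_Icc.2 ⟨by omega, hin⟩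
  have e1 := h1.2 (i+1) m2
  have e2 := h2.2 i m1
  have : x * (R (i+1) - R i) = c (i+1) - c i := by nlinarith
  rw [indiff, eq_div_iff (by linarith)]
  linarith [this]

lemma ff_BR_le (i : ℕ) (x : ℝ) (hi : 1 ≤ i) (hin : i + 1 ≤ n)
    (h1 : i ∈ BR n c R x) : x ≤ indiff c R i := by
  have hRlt : R i < R (i + 1) := h.2.2.2.2.1 i hi (by omega)
  have m2 : (i + 1 : ℕ) ∈ Finset.Icc 1 n := Finset.mem_Icc.2 ⟨by omega, hin⟩
  have e1 := h1.2 (i+1) m2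
  rw [indiff, le_div_iff₀ (by linarith)]
  nlinarith

end inst
section pifacts
variable {n : ℕ} {c R : ℕ → ℝ} {π : DLC}
variable (hInst : LinInstance n c R) (hπ : π.Valid n c R)
variable (hdec : ∀ k, 1 ≤ k → k < π.K → (π.a (k + 1) : ℤ) = (π.a k : ℤ) - 1)
include hInst hπ hdec

lemma ff_τ_pos (k : ℕ) (h1 : 1 ≤ k) (h2 : k ≤ π.K) : 0 < π.τ k :=
  (hπ.2.1 k (Finset.mem_Icc.2 ⟨h1, h2⟩)).2.1

lemma ff_α_nonneg (k : ℕ) (h1 : 1 ≤ k) (h2 : k ≤ π.K) : 0 ≤ π.α k :=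
  (hπ.2.1 k (Finset.mem_Icc.2 ⟨h1, h2⟩)).1

lemma ff_a_mem (k : ℕ) (h1 : 1 ≤ k) (h2 : k ≤ π.K) : 1 ≤ π.a k ∧ π.a k ≤ n := by
  have := (hπ.2.1 k (Finset.mem_Icc.2 ⟨h1, h2⟩)).2.2
  exact Finset.mem_Icc.1 this

lemma ff_T_pos (k : ℕ) (h1 : 1 ≤ k) (h2 : k ≤ π.K) : 0 < π.Tsum k := by
  refine Finset.sum_pos (fun j hj => ?_) ⟨1, Finset.mem_Icc.2 ⟨le_rfl, h1⟩⟩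
  have hj' := Finset.mem_Icc.1 hj
  exact ff_τ_pos hInst hπ hdec j hj'.1 (le_trans hj'.2 h2)

lemma ff_T_step (k : ℕ) (h1 : 1 ≤ k) : π.Tsum k = π.Tsum (k-1) + π.τ k :=
  ff_sum_top _ k h1

lemma ff_A_step (k : ℕ) (h1 : 1 ≤ k) : π.Asum k = π.Asum (k-1) + π.α k * π.τ k :=
  ff_sum_top _ k h1

lemma ff_A_mono (k l : ℕ) (hkl : k ≤ l) (hl : l ≤ π.K) : π.Asum k ≤ π.Asum l := by
  refine Finset.sum_le_sum_of_subset_of_nonneg (Finset.Icc_subset_Icc_right hkl)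
    (fun j hj _ => ?_)
  have hj' := Finset.mem_Icc.1 hj
  exact mul_nonneg (ff_α_nonneg hInst hπ hdec j hj'.1 (le_trans hj'.2 hl))
    (le_of_lt (ff_τ_pos hInst hπ hdec j hj'.1 (le_trans hj'.2 hl)))

lemma ff_A_nonneg (k : ℕ) (hl : k ≤ π.K) : 0 ≤ π.Asum k := by
  have := ff_A_mono hInst hπ hdec 0 k (Nat.zero_le k) hl
  simpa [DLC.Asum] using this

lemma ff_A_eq (k : ℕ) (h1 : 1 ≤ k) (h2 : k ≤ π.K) : π.Asum k = π.avg k * π.Tsum k := by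
  rw [DLC.avg, div_mul_cancel₀]
  exact ne_of_gt (ff_T_pos hInst hπ hdec k h1 h2)

lemma ff_a_step (k : ℕ) (h1 : 1 ≤ k) (h2 : k < π.K) : π.a k = π.a (k+1) + 1 := by
  have h := hdec k h1 h2
  have ha1 := (ff_a_mem hInst hπ hdec (k+1) (by omega) (by omega)).1
  omega

lemma ff_a_anti (k l : ℕ) (h1 : 1 ≤ k) (hkl : k ≤ l) (hl : l ≤ π.K) : π.a l ≤ π.a k := by
  induction l with
  | zero => omega
  | succ l ih =>
      rcases Nat.eq_or_lt_of_le hkl with rfl | hlt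
      · exact le_rfl
      · have hstep := ff_a_step hInst hπ hdec l (by omega) (by omega)
        have := ih (by omega) (by omega)
        omega

lemma ff_avg_pin (k : ℕ) (h1 : 2 ≤ k) (h2 : k ≤ π.K) :
    π.avg (k-1) = indiff c R (π.a k) := by
  have hstep : π.a (k-1) = π.a k + 1 := by
    have := ff_a_step hInst hπ hdec (k-1) (by omega) (by omega)
    have hk1 : k - 1 + 1 = k := by omega
    rw [hk1] at this; exact this
  have hb1 : π.a k ∈ BR n c R (π.avg (k-1)) := hπ.2.2.2 k h1 h2
  have hb2 : π.a (k-1) ∈ BR n c R (π.avg (k-1)) := hπ.2.2.1 (k-1) (Finset.mem_Icc.2 ⟨by omega, by omega⟩)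
  rw [hstep] at hb2
  exact ff_BR_pair hInst (π.a k) _ (ff_a_mem hInst hπ hdec k (by omega) h2).1
    (by rw [← hstep]; exact (ff_a_mem hInst hπ hdec (k-1) (by omega) (by omega)).2) hb1 hb2

lemma ff_a_ub (k : ℕ) (h1 : 2 ≤ k) (h2 : k ≤ π.K) : π.a k + 1 ≤ n := by
  have hstep : π.a (k-1) = π.a k + 1 := by
    have := ff_a_step hInst hπ hdec (k-1) (by omega) (by omega)
    have hk1 : k - 1 + 1 = k := by omega
    rw [hk1] at this; exact this
  rw [← hstep]; exact (ff_a_mem hInst hπ hdec (k-1) (by omega) (by omega)).2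

lemma ff_avg_pos (k : ℕ) (h1 : 1 ≤ k) (h2 : k ≤ π.K - 1) : 0 < π.avg k := by
  have hpin := ff_avg_pin hInst hπ hdec (k+1) (by omega) (by omega)
  have hk : k + 1 - 1 = k := by omega
  rw [hk] at hpin; rw [hpin]
  have hub := ff_a_ub hInst hπ hdec (k+1) (by omega) (by omega)
  exact ff_indiff_pos hInst _ (ff_a_mem hInst hπ hdec (k+1) (by omega) (by omega)).1 (by omega)

lemma ff_avg_le1 (k : ℕ) (h1 : 1 ≤ k) (h2 : k ≤ π.K - 1) : π.avg k ≤ 1 := by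
  have hpin := ff_avg_pin hInst hπ hdec (k+1) (by omega) (by omega)
  have hk : k + 1 - 1 = k := by omega
  rw [hk] at hpin; rw [hpin]
  have hub := ff_a_ub hInst hπ hdec (k+1) (by omega) (by omega)
  exact ff_indiff_le1 hInst _ (ff_a_mem hInst hπ hdec (k+1) (by omega) (by omega)).1 (by omega)

lemma ff_avg_strict (k : ℕ) (h1 : 2 ≤ k) (h2 : k ≤ π.K - 1) :
    π.avg k < π.avg (k-1) := by
  have hp1 := ff_avg_pin hInst hπ hdec k h1 (by omega)
  have hp2 := ff_avg_pin hInst hπ hdec (k+1) (by omega) (by omega)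
  have hk : k + 1 - 1 = k := by omega
  rw [hk] at hp2
  rw [hp1, hp2]
  have hstep : π.a k = π.a (k+1) + 1 := ff_a_step hInst hπ hdec k (by omega) (by omega)
  rw [hstep]
  refine hInst.2.2.2.2.2.2.1 _ (ff_a_mem hInst hπ hdec (k+1) (by omega) (by omega)).1 ?_
  have hub := ff_a_ub hInst hπ hdec k h1 (by omega)
  omega

lemma ff_avg_last_le (hK : 2 ≤ π.K) : π.avg π.K ≤ π.avg (π.K - 1) := by
  rw [ff_avg_pin hInst hπ hdec π.K hK le_rfl]
  exact ff_BR_le hInst _ _ (ff_a_mem hInst hπ hdec π.K (by omega) le_rfl).1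
    (ff_a_ub hInst hπ hdec π.K hK le_rfl)
    (hπ.2.2.1 π.K (Finset.mem_Icc.2 ⟨by omega, le_rfl⟩))

lemma ff_avgK_pos (hK : 2 ≤ π.K) : 0 < π.avg π.K := by
  have hA : 0 < π.Asum π.K := by
    have h1 : π.Asum (π.K - 1) = π.avg (π.K-1) * π.Tsum (π.K-1) :=
      ff_A_eq hInst hπ hdec _ (by omega) (by omega)
    have h2 : 0 < π.avg (π.K-1) := ff_avg_pos hInst hπ hdec _ (by omega) le_rfl
    have h3 : 0 < π.Tsum (π.K-1) := ff_T_pos hInst hπ hdec _ (by omega) (by omega)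
    have h4 := ff_A_mono hInst hπ hdec (π.K - 1) π.K (by omega) le_rfl
    nlinarith
  exact div_pos hA (ff_T_pos hInst hπ hdec _ (by omega) le_rfl)

lemma ff_α_le_avg (k : ℕ) (h1 : 1 ≤ k) (h2 : k ≤ π.K - 1) : π.α k ≤ π.avg k := by
  rcases Nat.eq_or_lt_of_le h1 with rfl | hk2
  · have hT1 : π.Tsum 1 = π.τ 1 := by simp [DLC.Tsum]
    have hA1 : π.Asum 1 = π.α 1 * π.τ 1 := by simp [DLC.Asum]
    have hτ : 0 < π.τ 1 := ff_τ_pos hInst hπ hdec 1 le_rfl (by omega)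
    rw [DLC.avg, hT1, hA1, mul_div_assoc, div_self (ne_of_gt hτ), mul_one]
  · have hdecr : π.avg k ≤ π.avg (k-1) :=
      le_of_lt (ff_avg_strict hInst hπ hdec k (by omega) h2)
    have hAk := ff_A_eq hInst hπ hdec k (by omega) (by omega)
    have hAk1 := ff_A_eq hInst hπ hdec (k-1) (by omega) (by omega)
    have hstepA := ff_A_step hInst hπ hdec k (by omega)
    have hstepT := ff_T_step hInst hπ hdec k (by omega)
    have hτ : 0 < π.τ k := ff_τ_pos hInst hπ hdec k (by omega) (by omega)
    have hT1 : 0 < π.Tsum (k-1) := ff_T_pos hInst hπ hdec (k-1) (by omega) (by omega)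
    have e : π.α k * π.τ k
        = π.avg k * π.τ k + (π.avg k - π.avg (k-1)) * π.Tsum (k-1) := by
      linear_combination hAk - hstepA - hAk1 + π.avg k * hstepT
    have key : π.α k * π.τ k ≤ π.avg k * π.τ k := by
      nlinarith [mul_nonneg (sub_nonneg.2 hdecr) (le_of_lt hT1)]
    exact le_of_mul_le_mul_right key hτ

lemma ff_r_anti (k l : ℕ) (h1 : 1 ≤ k) (hkl : k ≤ l) (hl : l ≤ π.K) :
    R (π.a l) ≤ R (π.a k) := by
  refine ff_R_mono hInst _ _ (ff_a_mem hInst hπ hdec l (by omega) hl).1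
    (ff_a_anti hInst hπ hdec k l h1 hkl hl) (ff_a_mem hInst hπ hdec k h1 (by omega)).2

lemma ff_r_strict (k : ℕ) (h1 : 1 ≤ k) (h2 : k < π.K) :
    R (π.a (k+1)) < R (π.a k) := by
  have hstep := ff_a_step hInst hπ hdec k h1 h2
  rw [hstep]
  refine hInst.2.2.2.2.1 _ (ff_a_mem hInst hπ hdec (k+1) (by omega) (by omega)).1 ?_
  have := ff_a_ub hInst hπ hdec (k+1) (by omega) (by omega)
  omega

end pifacts
lemma ff_num (σ : DLC) (R : ℕ → ℝ) :
    ∑ k ∈ Finset.Icc 1 σ.K, σ.τ k * (1 - σ.α k) * R (σ.a k)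
      = ∑ k ∈ Finset.Icc 1 σ.K,
          ((σ.Tsum k - σ.Asum k) - (σ.Tsum (k-1) - σ.Asum (k-1))) * R (σ.a k) := by
  refine Finset.sum_congr rfl (fun k hk => ?_)
  have hk1 := (Finset.mem_Icc.1 hk).1
  have h1 : σ.Tsum k = σ.Tsum (k-1) + σ.τ k := ff_sum_top _ k hk1
  have h2 : σ.Asum k = σ.Asum (k-1) + σ.α k * σ.τ k := ff_sum_top _ k hk1
  linear_combination R (σ.a k) * h2 - R (σ.a k) * h1

section main
variable {n : ℕ} {c R : ℕ → ℝ} {π : DLC}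
variable (hInst : LinInstance n c R) (hπ : π.Valid n c R)
variable (hdec : ∀ k, 1 ≤ k → k < π.K → (π.a (k + 1) : ℤ) = (π.a k : ℤ) - 1)
include hInst hπ hdec

lemma ff_main (hK2 : 2 ≤ π.K) (hlast : π.avg π.K < π.avg (π.K - 1)) :
    ∃ π' : DLC, π'.Valid n c R ∧ π'.FreeFall ∧ π'.Util R ≥ π.Util R := by
  obtain ⟨m, hm⟩ : ∃ m, π.K = m + 1 := ⟨π.K - 1, by omega⟩
  have hm1 : 1 ≤ m := by omega
  have hTK_pos : 0 < π.Tsum π.K := ff_T_pos hInst hπ hdec π.K (by omega) le_rfl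
  have hβK_pos : 0 < π.avg π.K := ff_avgK_pos hInst hπ hdec hK2
  set C := π.Asum π.K with hC_def
  have hC_pos : 0 < C := by
    have := ff_A_eq hInst hπ hdec π.K (by omega) le_rfl
    rw [hC_def, this]; positivity
  have hβpos : ∀ k, 1 ≤ k → k ≤ π.K → 0 < π.avg k := by
    intro k h1 h2
    rcases Nat.eq_or_lt_of_le h2 with rfl | hlt
    · exact hβK_pos
    · exact ff_avg_pos hInst hπ hdec k h1 (by omega)
  have hβle1 : ∀ k, 1 ≤ k → k ≤ π.K - 1 → π.avg k ≤ 1 :=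
    fun k h1 h2 => ff_avg_le1 hInst hπ hdec k h1 h2
  have hβdec : ∀ k, 2 ≤ k → k ≤ π.K → π.avg k < π.avg (k-1) := by
    intro k h1 h2
    rcases Nat.eq_or_lt_of_le h2 with rfl | hlt
    · exact hlast
    · exact ff_avg_strict hInst hπ hdec k h1 (by omega)
  set g : ℕ → ℝ := fun j => if j = 0 then 0 else C / π.avg j with hg
  set π' : DLC := ⟨π.K, fun j => if j = 1 then π.avg 1 else 0,
    fun j => g j - g (j - 1), π.a⟩ with hπ'def
  have hK' : π'.K = π.K := rfl
  have hT' : ∀ k, π'.Tsum k = g k := by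
    intro k
    have h0 : g 0 = 0 := by simp [hg]
    calc π'.Tsum k = ∑ j ∈ Finset.Icc 1 k, (g j - g (j-1)) := rfl
    _ = g k - g 0 := ff_telescope g k
    _ = g k := by rw [h0]; ring
  have hgval : ∀ k, 1 ≤ k → g k = C / π.avg k := by
    intro k h1; simp [hg, show k ≠ 0 by omega]
  have hτ'pos : ∀ k, 1 ≤ k → k ≤ π.K → 0 < g k - g (k-1) := by
    intro k h1 h2
    rcases Nat.eq_or_lt_of_le h1 with rfl | hlt
    · have hβ1 : 0 < π.avg 1 := hβpos 1 le_rfl (by omega)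
      simpa [hgval 1 le_rfl, show g 0 = 0 from by simp [hg]] using div_pos hC_pos hβ1
    · rw [hgval k (by omega), hgval (k-1) (by omega)]
      have := div_lt_div_of_pos_left hC_pos (hβpos k (by omega) h2)
        (hβdec k (by omega) h2)
      linarith
  have hA' : ∀ k, 1 ≤ k → π'.Asum k = C := by
    intro k h1
    have hβ1 : 0 < π.avg 1 := hβpos 1 le_rfl (by omega)
    calc π'.Asum k
        = ∑ j ∈ Finset.Icc 1 k, (if j = 1 then π.avg 1 else 0) * (g j - g (j-1)) := rfl
      _ = ∑ j ∈ Finset.Icc 1 k, (if j = 1 then C else 0) := by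
          refine Finset.sum_congr rfl (fun j _ => ?_)
          by_cases hj1 : j = 1
          · subst hj1
            simp only [if_pos rfl]
            rw [hgval 1 le_rfl]
            simp [hg]
            field_simp
          · simp [hj1]
      _ = C := by
          rw [Finset.sum_ite_eq' (Finset.Icc 1 k) 1 (fun _ => C)]
          simp [h1]
  have havg' : ∀ k, 1 ≤ k → k ≤ π.K → π'.avg k = π.avg k := by
    intro k h1 h2
    rw [DLC.avg, hA' k h1, hT' k, hgval k h1]
    have hx : π.avg k ≠ 0 := ne_of_gt (hβpos k h1 h2)
    field_simp
  have hTK' : π'.Tsum π'.K = π.Tsum π.K := by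
    rw [hK', hT' π.K, hgval π.K (by omega)]
    rw [DLC.avg, ← hC_def]
    have hx : π.Tsum π.K ≠ 0 := ne_of_gt hTK_pos
    have hc : C ≠ 0 := ne_of_gt hC_pos
    field_simp
  refine ⟨π', ⟨?_, ?_, ?_, ?_⟩, ?_, ?_⟩
  · exact hπ.1
  · intro k hk
    obtain ⟨h1, h2⟩ := Finset.mem_Icc.1 (by rwa [hK'] at hk)
    refine ⟨?_, hτ'pos k h1 h2, (hπ.2.1 k (Finset.mem_Icc.2 ⟨h1, h2⟩)).2.2⟩
    show (0:ℝ) ≤ if k = 1 then π.avg 1 else 0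
    split_ifs
    · exact le_of_lt (hβpos 1 le_rfl (by omega))
    · exact le_rfl
  · intro k hk
    obtain ⟨h1, h2⟩ := Finset.mem_Icc.1 (by rwa [hK'] at hk)
    have := hπ.2.2.1 k (Finset.mem_Icc.2 ⟨h1, h2⟩)
    show π.a k ∈ BR n c R (π'.avg k)
    rwa [havg' k h1 h2]
  · intro k h2k hkK
    rw [hK'] at hkK
    have := hπ.2.2.2 k h2k hkK
    show π.a k ∈ BR n c R (π'.avg (k-1))
    rwa [havg' (k-1) (by omega) (by omega)]
  · intro k h2k hkK
    show (if k = 1 then π.avg 1 else 0) = 0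
    rw [if_neg (by omega)]
  · -- utility comparison
    have hD0 : π.Tsum 0 - π.Asum 0 = 0 := by simp [DLC.Tsum, DLC.Asum]
    have hD0' : π'.Tsum 0 - π'.Asum 0 = 0 := by simp [DLC.Tsum, DLC.Asum]
    have habelπ : ∑ k ∈ Finset.Icc 1 π.K, π.τ k * (1 - π.α k) * R (π.a k)
        = ∑ k ∈ Finset.Icc 1 m,
            (π.Tsum k - π.Asum k) * (R (π.a k) - R (π.a (k+1)))
          + (π.Tsum (m+1) - π.Asum (m+1)) * R (π.a (m+1)) := by
      rw [ff_num π R, hm]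
      exact ff_abel _ _ hD0 m
    have habelπ' : ∑ k ∈ Finset.Icc 1 π'.K, π'.τ k * (1 - π'.α k) * R (π'.a k)
        = ∑ k ∈ Finset.Icc 1 m,
            (π'.Tsum k - π'.Asum k) * (R (π.a k) - R (π.a (k+1)))
          + (π'.Tsum (m+1) - π'.Asum (m+1)) * R (π.a (m+1)) := by
      rw [ff_num π' R]
      rw [show π'.K = m + 1 from hm]
      exact ff_abel _ _ hD0' m
    have hDK : π'.Tsum (m+1) - π'.Asum (m+1) = π.Tsum (m+1) - π.Asum (m+1) := by
      have e1 : π'.Tsum (m+1) = π.Tsum (m+1) := by rw [← hm, ← hK']; exact hTK'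
      have e2 : π'.Asum (m+1) = π.Asum (m+1) := by rw [hA' (m+1) (by omega), hC_def, hm]
      rw [e1, e2]
    have hsum_le : ∀ k ∈ Finset.Icc 1 m,
        (π.Tsum k - π.Asum k) * (R (π.a k) - R (π.a (k+1)))
          ≤ (π'.Tsum k - π'.Asum k) * (R (π.a k) - R (π.a (k+1))) := by
      intro k hk
      obtain ⟨h1, h2⟩ := Finset.mem_Icc.1 hk
      have hkK : k ≤ π.K - 1 := by omega
      have hβ : 0 < π.avg k := hβpos k h1 (by omega)
      have hβ1 : π.avg k ≤ 1 := hβle1 k h1 hkK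
      have hT : 0 < π.Tsum k := ff_T_pos hInst hπ hdec k h1 (by omega)
      have hA : π.Asum k = π.avg k * π.Tsum k := ff_A_eq hInst hπ hdec k h1 (by omega)
      have hAC : π.Asum k ≤ C := ff_A_mono hInst hπ hdec k π.K (by omega) le_rfl
      have hr : 0 ≤ R (π.a k) - R (π.a (k+1)) := by
        have := ff_r_strict hInst hπ hdec k h1 (by omega)
        linarith
      refine mul_le_mul_of_nonneg_right ?_ hr
      rw [hT' k, hA' k h1, hgval k h1]
      have key : (π.Tsum k - π.Asum k + C) * π.avg k ≤ C := by
        nlinarith [mul_le_mul_of_nonneg_left hAC (show (0:ℝ) ≤ 1 - π.avg k by linarith)]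
      have : π.Tsum k - π.Asum k + C ≤ C / π.avg k := (le_div_iff₀ hβ).2 key
      linarith
    have hle : ∑ k ∈ Finset.Icc 1 π.K, π.τ k * (1 - π.α k) * R (π.a k)
        ≤ ∑ k ∈ Finset.Icc 1 π'.K, π'.τ k * (1 - π'.α k) * R (π'.a k) := by
      rw [habelπ, habelπ', hDK]
      exact add_le_add_left (Finset.sum_le_sum hsum_le) _
    show π'.Util R ≥ π.Util R
    rw [DLC.Util, DLC.Util, hTK']
    gcongr
end main

/-- Any valid dynamic linear contract whose actions are
consecutively decreasing is dominated by a valid free-fall linear contract. -/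
theorem decreasing_to_free_fall (n : ℕ) (c R : ℕ → ℝ) (hInst : LinInstance n c R)
    (π : DLC) (hπ : π.Valid n c R)
    (hdec : ∀ k, 1 ≤ k → k < π.K → (π.a (k + 1) : ℤ) = (π.a k : ℤ) - 1) :
    ∃ π' : DLC, π'.Valid n c R ∧ π'.FreeFall ∧ π'.Util R ≥ π.Util R := by
  rcases Nat.lt_or_ge π.K 2 with hK1 | hK2
  · exact ⟨π, hπ, fun k h2 hk => absurd (le_trans h2 hk) (by omega), le_rfl⟩
  rcases lt_or_eq_of_le (ff_avg_last_le hInst hπ hdec hK2) with hlt | heqq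
  · exact ff_main hInst hπ hdec hK2 hlt
  -- truncation case : π.avg π.K = π.avg (π.K - 1)
  set σ : DLC := ⟨π.K - 1, π.α, π.τ, π.a⟩ with hσdef
  have hσK : σ.K = π.K - 1 := rfl
  have hσvalid : σ.Valid n c R := by
    refine ⟨by omega, fun k hk => ?_, fun k hk => ?_, fun k h2 hk => ?_⟩
    · obtain ⟨h1, h2⟩ := Finset.mem_Icc.1 hk
      exact hπ.2.1 k (Finset.mem_Icc.2 ⟨h1, by omega⟩)
    · obtain ⟨h1, h2⟩ := Finset.mem_Icc.1 hk
      exact hπ.2.2.1 k (Finset.mem_Icc.2 ⟨h1, by omega⟩)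
    · exact hπ.2.2.2 k h2 (by omega)
  have hσdec : ∀ k, 1 ≤ k → k < σ.K → (σ.a (k + 1) : ℤ) = (σ.a k : ℤ) - 1 :=
    fun k h1 h2 => hdec k h1 (by omega)
  -- utility of truncation dominates
  set β := π.avg (π.K - 1) with hβdef
  set rK := R (π.a π.K) with hrKdef
  set N' := ∑ k ∈ Finset.Icc 1 (π.K - 1), π.τ k * (1 - π.α k) * R (π.a k) with hN'def
  have hT1 : 0 < π.Tsum (π.K - 1) := ff_T_pos hInst hπ hdec _ (by omega) (by omega)
  have hτK : 0 < π.τ π.K := ff_τ_pos hInst hπ hdec π.K (by omega) le_rfl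
  have hTstep : π.Tsum π.K = π.Tsum (π.K - 1) + π.τ π.K := ff_T_step hInst hπ hdec π.K (by omega)
  have hAstep : π.Asum π.K = π.Asum (π.K - 1) + π.α π.K * π.τ π.K := ff_A_step hInst hπ hdec π.K (by omega)
  have e1 : π.Asum π.K = π.avg π.K * π.Tsum π.K := ff_A_eq hInst hπ hdec π.K (by omega) le_rfl
  have e2 : π.Asum (π.K - 1) = β * π.Tsum (π.K - 1) := ff_A_eq hInst hπ hdec _ (by omega) (by omega)
  have hαK : π.α π.K = β := by
    have hmul : π.α π.K * π.τ π.K = β * π.τ π.K := by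
      linear_combination e1 - hAstep - e2 + π.Tsum π.K * heqq + β * hTstep
    exact mul_right_cancel₀ (ne_of_gt hτK) hmul
  have hβle1 : β ≤ 1 := ff_avg_le1 hInst hπ hdec _ (by omega) (by omega)
  have hrK0 : 0 ≤ rK := ff_R_nonneg hInst _ (ff_a_mem hInst hπ hdec π.K (by omega) le_rfl).1
    (ff_a_mem hInst hπ hdec π.K (by omega) le_rfl).2
  have hterm : ∀ k ∈ Finset.Icc 1 (π.K - 1),
      π.τ k * (1 - π.α k) * rK ≤ π.τ k * (1 - π.α k) * R (π.a k) := by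
    intro k hk
    obtain ⟨h1, h2⟩ := Finset.mem_Icc.1 hk
    have hα1 : π.α k ≤ 1 :=
      le_trans (ff_α_le_avg hInst hπ hdec k h1 h2) (ff_avg_le1 hInst hπ hdec k h1 h2)
    have hτk : 0 < π.τ k := ff_τ_pos hInst hπ hdec k h1 (by omega)
    refine mul_le_mul_of_nonneg_left ?_ (mul_nonneg hτk.le (by linarith))
    exact ff_r_anti hInst hπ hdec k π.K h1 (by omega) le_rfl
  have hsplitsum : ∑ k ∈ Finset.Icc 1 (π.K - 1), π.τ k * (1 - π.α k)
      = π.Tsum (π.K - 1) - π.Asum (π.K - 1) := by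
    rw [Finset.sum_congr rfl (fun k _ => show π.τ k * (1 - π.α k) = π.τ k - π.α k * π.τ k by ring),
      Finset.sum_sub_distrib]
    rfl
  have hN' : (1 - β) * rK * π.Tsum (π.K - 1) ≤ N' := by
    have h := Finset.sum_le_sum hterm
    calc (1 - β) * rK * π.Tsum (π.K - 1)
        = (π.Tsum (π.K - 1) - π.Asum (π.K - 1)) * rK := by rw [e2]; ring
      _ = ∑ k ∈ Finset.Icc 1 (π.K - 1), π.τ k * (1 - π.α k) * rK := by
          rw [← Finset.sum_mul, hsplitsum]
      _ ≤ N' := h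
  have hUσ : σ.Util R ≥ π.Util R := by
    have hUσeq : σ.Util R = N' / π.Tsum (π.K - 1) := rfl
    have hsplit : ∑ k ∈ Finset.Icc 1 π.K, π.τ k * (1 - π.α k) * R (π.a k)
        = N' + π.τ π.K * (1 - π.α π.K) * rK := ff_sum_top _ π.K (by omega)
    have hπU : π.Util R = (N' + π.τ π.K * (1 - π.α π.K) * rK) / (π.Tsum (π.K - 1) + π.τ π.K) := by
      rw [DLC.Util, hsplit, hTstep]
    rw [ge_iff_le, hUσeq, hπU, div_le_div_iff₀ (by linarith) hT1, hαK]
    nlinarith [mul_le_mul_of_nonneg_right hN' hτK.le]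
  rcases Nat.lt_or_ge σ.K 2 with h1 | h2
  · exact ⟨σ, hσvalid, fun k hk2 hk => absurd (le_trans hk2 hk) (by omega), hUσ⟩
  · have hstrict : σ.avg σ.K < σ.avg (σ.K - 1) := by
      have h := ff_avg_strict hInst hπ hdec (π.K - 1) (by omega) (by omega)
      have e : σ.K - 1 = π.K - 1 - 1 := rfl
      exact h
    obtain ⟨π', h1', h2', h3'⟩ := ff_main hInst hσvalid hσdec h2 hstrict
    exact ⟨π', h1', h2', le_trans hUσ h3'⟩
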